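/- For any typewriter M in type D structures over A₂ and any DA bimodule P over (A₁, A₂), the box tensor product P ⊠ M := (P ⊠ M₀, P ⊠ M₁; I ⊠ D_f, I ⊠ D_h; I ⊠ D_CR) is a typewriter in type D structures over A₁; moreover P ⊠ (·) is functorial: it sends morphisms of typewriters to morphisms, homotopies to homotopies, and hence homotopy equivalences of typewriters to homotopy equivalences. -/

import Mathlib

set_option maxHeartbeats 1000000

/-!
STATEMENT 16: For any typewriter M in type D structures over A₂ and any DA
bimodule P over (A₁, A₂), the box tensor product
P ⊠ M = (P ⊠ M₀, P ⊠ M₁; I ⊠ D_f, I ⊠ D_h; I ⊠ D_CR) is a typewriter in type D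
structures over A₁; moreover P ⊠ (·) is functorial: it sends morphisms of
typewriters to morphisms and homotopies to homotopies (hence homotopy
equivalences to homotopy equivalences).  (The DA bimodule P is modelled by its
actions δ¹₁ and δ¹₂, with the DA structure relations as hypotheses.)
-/

set_option maxHeartbeats 1000000 in
abbrev F2 := ZMod 2
open scoped TensorProduct
open LinearMap

section TypeD

variable {A : Type} [Ring A] [Algebra F2 A]
variable {M N P Q P' Q' : Type}
  [AddCommGroup M] [Module F2 M] [AddCommGroup N] [Module F2 N]
  [AddCommGroup P] [Module F2 P] [AddCommGroup Q] [Module F2 Q]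
  [AddCommGroup P'] [Module F2 P'] [AddCommGroup Q'] [Module F2 Q']

/-- Composition of coefficient-type maps: μ ∘ (id_A ⊗ ψ) ∘ φ. -/
noncomputable def comp2 (ψ : N →ₗ[F2] A ⊗[F2] P) (φ : M →ₗ[F2] A ⊗[F2] N) :
    M →ₗ[F2] A ⊗[F2] P :=
  (rTensor P (mul' F2 A)) ∘ₗ (TensorProduct.assoc F2 A A P).symm.toLinearMap ∘ₗ
    (lTensor A ψ) ∘ₗ φ

/-- The identity morphism of type D structures, x ↦ 1 ⊗ x. -/
noncomputable def idD (A : Type) [Ring A] [Algebra F2 A] (M : Type) [AddCommGroup M]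
    [Module F2 M] : M →ₗ[F2] A ⊗[F2] M :=
  TensorProduct.mk F2 A M 1

variable (dA : A →ₗ[F2] A)

/-- The type D structure relation over the dg algebra (A, dA). -/
noncomputable def IsTypeD (δ : M →ₗ[F2] A ⊗[F2] M) : Prop :=
  comp2 δ δ + rTensor M dA ∘ₗ δ = 0

/-- φ is a morphism of type D structures (M, δM) → (N, δN). -/
noncomputable def IsDMor (δM : M →ₗ[F2] A ⊗[F2] M) (δN : N →ₗ[F2] A ⊗[F2] N)
    (φ : M →ₗ[F2] A ⊗[F2] N) : Prop :=
  comp2 δN φ + comp2 φ δM + rTensor N dA ∘ₗ φ = 0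

/-- ν is a homotopy between the morphisms φ and φ' of type D structures. -/
noncomputable def IsDHtpy (δM : M →ₗ[F2] A ⊗[F2] M) (δN : N →ₗ[F2] A ⊗[F2] N)
    (φ φ' ν : M →ₗ[F2] A ⊗[F2] N) : Prop :=
  φ + φ' = comp2 δN ν + comp2 ν δM + rTensor N dA ∘ₗ ν

/- Structural ("hat") maps between direct sums. -/
noncomputable def hat0 (φ : P →ₗ[F2] A ⊗[F2] P') : P × Q →ₗ[F2] A ⊗[F2] (P' × Q') :=
  lTensor A (LinearMap.inl F2 P' Q') ∘ₗ φ ∘ₗ LinearMap.fst F2 P Q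
noncomputable def hat1 (φ : Q →ₗ[F2] A ⊗[F2] Q') : P × Q →ₗ[F2] A ⊗[F2] (P' × Q') :=
  lTensor A (LinearMap.inr F2 P' Q') ∘ₗ φ ∘ₗ LinearMap.snd F2 P Q
noncomputable def hatf (φ : P →ₗ[F2] A ⊗[F2] Q') : P × Q →ₗ[F2] A ⊗[F2] (P' × Q') :=
  lTensor A (LinearMap.inr F2 P' Q') ∘ₗ φ ∘ₗ LinearMap.fst F2 P Q
noncomputable def hatg (φ : Q →ₗ[F2] A ⊗[F2] P') : P × Q →ₗ[F2] A ⊗[F2] (P' × Q') :=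
  lTensor A (LinearMap.inl F2 P' Q') ∘ₗ φ ∘ₗ LinearMap.snd F2 P Q

/- Components of a map between direct sums. -/
noncomputable def cg (ψ : P × Q →ₗ[F2] A ⊗[F2] (P' × Q')) : Q →ₗ[F2] A ⊗[F2] P' :=
  lTensor A (LinearMap.fst F2 P' Q') ∘ₗ ψ ∘ₗ LinearMap.inr F2 P Q
noncomputable def cfg (ψ : P × Q →ₗ[F2] A ⊗[F2] (P' × Q')) : P →ₗ[F2] A ⊗[F2] P' :=
  lTensor A (LinearMap.fst F2 P' Q') ∘ₗ ψ ∘ₗ LinearMap.inl F2 P Q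
noncomputable def cgh (ψ : P × Q →ₗ[F2] A ⊗[F2] (P' × Q')) : Q →ₗ[F2] A ⊗[F2] Q' :=
  lTensor A (LinearMap.snd F2 P' Q') ∘ₗ ψ ∘ₗ LinearMap.inr F2 P Q
noncomputable def cfgh (ψ : P × Q →ₗ[F2] A ⊗[F2] (P' × Q')) : P →ₗ[F2] A ⊗[F2] Q' :=
  lTensor A (LinearMap.snd F2 P' Q') ∘ₗ ψ ∘ₗ LinearMap.inl F2 P Q

/-- The triangular map (x,y) ↦ (a x, b y + c x): gives both the structure map
of a mapping cone (for a, b the structure maps and c the glued morphism) and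
the induced ("bold") maps on mapping cones. -/
noncomputable def dbold (a : P →ₗ[F2] A ⊗[F2] P') (b : Q →ₗ[F2] A ⊗[F2] Q')
    (c : P →ₗ[F2] A ⊗[F2] Q') : P × Q →ₗ[F2] A ⊗[F2] (P' × Q') :=
  hat0 a + hat1 b + hatf c

end TypeD

/-- A typewriter in type D structures over the dg algebra (A, dA). -/
structure TWOb (A : Type) [Ring A] [Algebra F2 A] (dA : A →ₗ[F2] A) where
  C0 : Type
  C1 : Type
  [ig0 : AddCommGroup C0] [im0 : Module F2 C0]
  [ig1 : AddCommGroup C1] [im1 : Module F2 C1]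
  δ0 : C0 →ₗ[F2] A ⊗[F2] C0
  δ1 : C1 →ₗ[F2] A ⊗[F2] C1
  h0 : IsTypeD dA δ0
  h1 : IsTypeD dA δ1
  Df : C0 →ₗ[F2] A ⊗[F2] C1
  Dh : C0 →ₗ[F2] A ⊗[F2] C1
  hf : IsDMor dA δ0 δ1 Df
  hh : IsDMor dA δ0 δ1 Dh
  DCR : C0 × C1 →ₗ[F2] A ⊗[F2] (C0 × C1)
  hcr : IsDMor dA (dbold δ0 δ1 Df) (dbold δ0 δ1 Dh) DCR

attribute [instance] TWOb.ig0 TWOb.im0 TWOb.ig1 TWOb.im1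

section Hom

variable {A : Type} [Ring A] [Algebra F2 A] {dA : A →ₗ[F2] A}

/-- A morphism of typewriters in type D structures over (A, dA). -/
structure TWHom (X Y : TWOb A dA) where
  t0 : X.C0 →ₗ[F2] A ⊗[F2] Y.C0
  t1 : X.C1 →ₗ[F2] A ⊗[F2] Y.C1
  tf : X.C0 →ₗ[F2] A ⊗[F2] Y.C1
  th : X.C0 →ₗ[F2] A ⊗[F2] Y.C1
  tcr : X.C0 × X.C1 →ₗ[F2] A ⊗[F2] (Y.C0 × Y.C1)
  h0 : IsDMor dA X.δ0 Y.δ0 t0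
  h1 : IsDMor dA X.δ1 Y.δ1 t1
  hf : comp2 t1 X.Df + comp2 Y.Df t0
      = comp2 Y.δ1 tf + comp2 tf X.δ0 + rTensor Y.C1 dA ∘ₗ tf
  hh : comp2 t1 X.Dh + comp2 Y.Dh t0
      = comp2 Y.δ1 th + comp2 th X.δ0 + rTensor Y.C1 dA ∘ₗ th
  hcr : comp2 (dbold t0 t1 th) X.DCR + comp2 Y.DCR (dbold t0 t1 tf)
      = comp2 (dbold Y.δ0 Y.δ1 Y.Dh) tcr + comp2 tcr (dbold X.δ0 X.δ1 X.Df)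
        + rTensor (Y.C0 × Y.C1) dA ∘ₗ tcr

/-- The induced map 𝐓_f : Cone(D_f) → Cone(D'_f). -/
noncomputable def TWHom.boldf {X Y : TWOb A dA} (T : TWHom X Y) :
    X.C0 × X.C1 →ₗ[F2] A ⊗[F2] (Y.C0 × Y.C1) := dbold T.t0 T.t1 T.tf

/-- The induced map 𝐓_h : Cone(D_h) → Cone(D'_h). -/
noncomputable def TWHom.boldh {X Y : TWOb A dA} (T : TWHom X Y) :
    X.C0 × X.C1 →ₗ[F2] A ⊗[F2] (Y.C0 × Y.C1) := dbold T.t0 T.t1 T.th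

/-- The induced map 𝐓_CR : Cone(D_CR) → Cone(D'_CR). -/
noncomputable def TWHom.boldcr {X Y : TWOb A dA} (T : TWHom X Y) :
    (X.C0 × X.C1) × (X.C0 × X.C1) →ₗ[F2] A ⊗[F2] ((Y.C0 × Y.C1) × (Y.C0 × Y.C1)) :=
  dbold T.boldf T.boldh T.tcr

/-- The structure map of Cone(D_CR). -/
noncomputable def TWOb.coneCR (X : TWOb A dA) :
    (X.C0 × X.C1) × (X.C0 × X.C1) →ₗ[F2] A ⊗[F2] ((X.C0 × X.C1) × (X.C0 × X.C1)) :=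
  dbold (dbold X.δ0 X.δ1 X.Df) (dbold X.δ0 X.δ1 X.Dh) X.DCR

/-- A homotopy between morphisms S, T of typewriters. -/
structure TWHtpy {X Y : TWOb A dA} (S T : TWHom X Y) where
  k0 : X.C0 →ₗ[F2] A ⊗[F2] Y.C0
  k1 : X.C1 →ₗ[F2] A ⊗[F2] Y.C1
  kf : X.C0 →ₗ[F2] A ⊗[F2] Y.C1
  kh : X.C0 →ₗ[F2] A ⊗[F2] Y.C1
  kcr : X.C0 × X.C1 →ₗ[F2] A ⊗[F2] (Y.C0 × Y.C1)
  p0 : IsDHtpy dA X.δ0 Y.δ0 S.t0 T.t0 k0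
  p1 : IsDHtpy dA X.δ1 Y.δ1 S.t1 T.t1 k1
  pf : IsDHtpy dA (dbold X.δ0 X.δ1 X.Df) (dbold Y.δ0 Y.δ1 Y.Df)
      S.boldf T.boldf (dbold k0 k1 kf)
  ph : IsDHtpy dA (dbold X.δ0 X.δ1 X.Dh) (dbold Y.δ0 Y.δ1 Y.Dh)
      S.boldh T.boldh (dbold k0 k1 kh)
  pcr : IsDHtpy dA X.coneCR Y.coneCR S.boldcr T.boldcr
      (dbold (dbold k0 k1 kf) (dbold k0 k1 kh) kcr)

end Hom


section Box

variable {A1 A2 : Type} [Ring A1] [Algebra F2 A1] [Ring A2] [Algebra F2 A2]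
variable {Pc : Type} [AddCommGroup Pc] [Module F2 Pc]

/-- The box tensor product structure map on P ⊠ N. -/
noncomputable def boxδ (d11 : Pc →ₗ[F2] A1 ⊗[F2] Pc)
    (d12 : Pc ⊗[F2] A2 →ₗ[F2] A1 ⊗[F2] Pc)
    {N : Type} [AddCommGroup N] [Module F2 N] (δN : N →ₗ[F2] A2 ⊗[F2] N) :
    Pc ⊗[F2] N →ₗ[F2] A1 ⊗[F2] (Pc ⊗[F2] N) :=
  (TensorProduct.assoc F2 A1 Pc N).toLinearMap ∘ₗ rTensor N d11
    + (TensorProduct.assoc F2 A1 Pc N).toLinearMap ∘ₗ rTensor N d12 ∘ₗ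
      (TensorProduct.assoc F2 Pc A2 N).symm.toLinearMap ∘ₗ lTensor Pc δN

/-- The box tensor product I ⊠ φ of the identity of P with a morphism φ. -/
noncomputable def boxMor (d12 : Pc ⊗[F2] A2 →ₗ[F2] A1 ⊗[F2] Pc)
    {N N' : Type} [AddCommGroup N] [Module F2 N] [AddCommGroup N'] [Module F2 N']
    (φ : N →ₗ[F2] A2 ⊗[F2] N') :
    Pc ⊗[F2] N →ₗ[F2] A1 ⊗[F2] (Pc ⊗[F2] N') :=
  (TensorProduct.assoc F2 A1 Pc N').toLinearMap ∘ₗ rTensor N' d12 ∘ₗ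
    (TensorProduct.assoc F2 Pc A2 N').symm.toLinearMap ∘ₗ lTensor Pc φ

/-- I ⊠ ψ for a map between mapping cones, transported through the canonical
identification P ⊠ (N₀ ⊕ N₁) ≅ (P ⊠ N₀) ⊕ (P ⊠ N₁). -/
noncomputable def boxCone (d12 : Pc ⊗[F2] A2 →ₗ[F2] A1 ⊗[F2] Pc)
    {C0 C1 C0' C1' : Type} [AddCommGroup C0] [Module F2 C0] [AddCommGroup C1]
    [Module F2 C1] [AddCommGroup C0'] [Module F2 C0'] [AddCommGroup C1'] [Module F2 C1']
    (ψ : C0 × C1 →ₗ[F2] A2 ⊗[F2] (C0' × C1')) :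
    (Pc ⊗[F2] C0) × (Pc ⊗[F2] C1) →ₗ[F2]
      A1 ⊗[F2] ((Pc ⊗[F2] C0') × (Pc ⊗[F2] C1')) :=
  lTensor A1 (TensorProduct.prodRight F2 F2 Pc C0' C1').toLinearMap ∘ₗ
    boxMor d12 ψ ∘ₗ (TensorProduct.prodRight F2 F2 Pc C0 C1).symm.toLinearMap

end Box


/-! ### Auxiliary toolkit -/

section CharTwo
lemma two_eq_zero' {M : Type} [AddCommGroup M] [Module F2 M] (x : M) : x + x = 0 := by
  have : (2 : F2) • x = 0 := by
    have : (2 : F2) = 0 := rfl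
    rw [this, zero_smul]
  rwa [two_smul] at this

lemma neg_eq_self' {M : Type} [AddCommGroup M] [Module F2 M] (x : M) : -x = x :=
  neg_eq_of_add_eq_zero_right (two_eq_zero' x)

lemma char2_solve {M : Type} [AddCommGroup M] [Module F2 M] {a b c d : M}
    (h : a + b + c + d = 0) : a + b + d = c := by
  have h' : c + (a + b + d) = 0 := by rw [← h]; abel
  rw [← neg_eq_of_add_eq_zero_right h', neg_eq_self']
end CharTwo

section Generic

variable {A : Type} [Ring A] [Algebra F2 A]
variable {M N P Q : Type}
  [AddCommGroup M] [Module F2 M] [AddCommGroup N] [Module F2 N]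
  [AddCommGroup P] [Module F2 P] [AddCommGroup Q] [Module F2 Q]

/-- Left multiplication by `a` on the coefficient factor. -/
noncomputable def ml (a : A) : A ⊗[F2] P →ₗ[F2] A ⊗[F2] P :=
  rTensor P (LinearMap.mulLeft F2 a)

@[simp] lemma ml_tmul (a x : A) (p : P) : ml a (x ⊗ₜ[F2] p) = (a * x) ⊗ₜ[F2] p := rfl

/-- The "half-composition" operator: `comp2 ψ φ = mulT ψ ∘ φ`. -/
noncomputable def mulT (ψ : N →ₗ[F2] A ⊗[F2] P) : A ⊗[F2] N →ₗ[F2] A ⊗[F2] P :=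
  (rTensor P (mul' F2 A)) ∘ₗ (TensorProduct.assoc F2 A A P).symm.toLinearMap ∘ₗ
    (lTensor A ψ)

lemma comp2_eq (ψ : N →ₗ[F2] A ⊗[F2] P) (φ : M →ₗ[F2] A ⊗[F2] N) :
    comp2 ψ φ = mulT ψ ∘ₗ φ := rfl

@[simp] lemma mulT_tmul (ψ : N →ₗ[F2] A ⊗[F2] P) (a : A) (n : N) :
    mulT ψ (a ⊗ₜ[F2] n) = ml a (ψ n) := by
  have : ∀ u : A ⊗[F2] P,
      (rTensor P (mul' F2 A)) ((TensorProduct.assoc F2 A A P).symm (a ⊗ₜ[F2] u))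
        = ml a u := by
    intro u
    induction u using TensorProduct.induction_on with
    | zero => simp
    | tmul b p => simp [ml]
    | add u v hu hv => simp [TensorProduct.tmul_add, hu, hv]
  simp only [mulT, LinearMap.comp_apply, lTensor_tmul, LinearEquiv.coe_coe]
  exact this (ψ n)

lemma mulT_add (ψ ψ' : N →ₗ[F2] A ⊗[F2] P) : mulT (ψ + ψ') = mulT ψ + mulT ψ' := by
  simp [mulT, lTensor_add, comp_add, add_comp]

lemma mulT_zero : mulT (0 : N →ₗ[F2] A ⊗[F2] P) = 0 := by
  simp [mulT]

lemma comp2_add_left (ψ ψ' : N →ₗ[F2] A ⊗[F2] P) (φ : M →ₗ[F2] A ⊗[F2] N) :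
    comp2 (ψ + ψ') φ = comp2 ψ φ + comp2 ψ' φ := by
  rw [comp2_eq, comp2_eq, comp2_eq, mulT_add, add_comp]

lemma comp2_add_right (ψ : N →ₗ[F2] A ⊗[F2] P) (φ φ' : M →ₗ[F2] A ⊗[F2] N) :
    comp2 ψ (φ + φ') = comp2 ψ φ + comp2 ψ φ' := by
  rw [comp2_eq, comp2_eq, comp2_eq, comp_add]

lemma comp2_zero_left (φ : M →ₗ[F2] A ⊗[F2] N) :
    comp2 (0 : N →ₗ[F2] A ⊗[F2] P) φ = 0 := by
  rw [comp2_eq, mulT_zero, zero_comp]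

lemma comp2_zero_right (ψ : N →ₗ[F2] A ⊗[F2] P) :
    comp2 ψ (0 : M →ₗ[F2] A ⊗[F2] N) = 0 := by
  rw [comp2_eq, comp_zero]

/-- Tensoring on the right with a fixed element. -/
noncomputable def rt (n : N) : A ⊗[F2] P →ₗ[F2] A ⊗[F2] (P ⊗[F2] N) :=
  lTensor A ((TensorProduct.mk F2 P N).flip n)

@[simp] lemma rt_tmul (n : N) (x : A) (p : P) :
    rt n (x ⊗ₜ[F2] p) = x ⊗ₜ[F2] (p ⊗ₜ[F2] n) := rfl

lemma ml_rt (a : A) (n : N) (v : A ⊗[F2] P) : ml a (rt n v) = rt n (ml a v) := by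
  induction v using TensorProduct.induction_on with
  | zero => simp
  | tmul x p => simp
  | add u v hu hv => simp [hu, hv]

lemma rT_rt (dA : A →ₗ[F2] A) (n : N) (v : A ⊗[F2] P) :
    rTensor (P ⊗[F2] N) dA (rt n v) = rt n (rTensor P dA v) := by
  induction v using TensorProduct.induction_on with
  | zero => simp
  | tmul x p => simp [rt]
  | add u v hu hv => simp [hu, hv]

end Generic

section BoxAux

variable {A1 A2 : Type} [Ring A1] [Algebra F2 A1] [Ring A2] [Algebra F2 A2]
variable {Pc : Type} [AddCommGroup Pc] [Module F2 Pc]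
variable (d11 : Pc →ₗ[F2] A1 ⊗[F2] Pc) (d12 : Pc ⊗[F2] A2 →ₗ[F2] A1 ⊗[F2] Pc)
variable {M N P C0 C1 C0' C1' : Type}
  [AddCommGroup M] [Module F2 M] [AddCommGroup N] [Module F2 N]
  [AddCommGroup P] [Module F2 P]
  [AddCommGroup C0] [Module F2 C0] [AddCommGroup C1] [Module F2 C1]
  [AddCommGroup C0'] [Module F2 C0'] [AddCommGroup C1'] [Module F2 C1']

/-- The `d11`-part of the box differential. -/
noncomputable def boxP (N : Type) [AddCommGroup N] [Module F2 N] :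
    Pc ⊗[F2] N →ₗ[F2] A1 ⊗[F2] (Pc ⊗[F2] N) :=
  (TensorProduct.assoc F2 A1 Pc N).toLinearMap ∘ₗ rTensor N d11

/-- The `d12`-conjugation map. -/
noncomputable def bx (N : Type) [AddCommGroup N] [Module F2 N] :
    Pc ⊗[F2] (A2 ⊗[F2] N) →ₗ[F2] A1 ⊗[F2] (Pc ⊗[F2] N) :=
  (TensorProduct.assoc F2 A1 Pc N).toLinearMap ∘ₗ rTensor N d12 ∘ₗ
    (TensorProduct.assoc F2 Pc A2 N).symm.toLinearMap

lemma boxδ_eq (δ : N →ₗ[F2] A2 ⊗[F2] N) :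
    boxδ d11 d12 δ = boxP d11 N + boxMor d12 δ := by
  simp only [boxδ, boxP, boxMor, bx]

lemma boxMor_eq (φ : M →ₗ[F2] A2 ⊗[F2] N) :
    boxMor d12 φ = bx d12 N ∘ₗ lTensor Pc φ := by
  simp only [boxMor, bx]; rfl

lemma assoc_rt (n : N) (v : A1 ⊗[F2] Pc) :
    (TensorProduct.assoc F2 A1 Pc N) (v ⊗ₜ[F2] n) = rt n v := by
  induction v using TensorProduct.induction_on with
  | zero => simp [TensorProduct.zero_tmul]
  | tmul x r => simp
  | add u v hu hv => rw [TensorProduct.add_tmul, map_add, hu, hv, map_add]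

@[simp] lemma boxP_tmul (p : Pc) (n : N) :
    boxP d11 N (p ⊗ₜ[F2] n) = rt n (d11 p) := by
  simp only [boxP, LinearMap.comp_apply, rTensor_tmul, LinearEquiv.coe_coe]
  exact assoc_rt n (d11 p)

@[simp] lemma bx_tmul (p : Pc) (a : A2) (n : N) :
    bx d12 N (p ⊗ₜ[F2] (a ⊗ₜ[F2] n)) = rt n (d12 (p ⊗ₜ[F2] a)) := by
  simp only [bx, LinearMap.comp_apply, LinearEquiv.coe_coe,
    TensorProduct.assoc_symm_tmul, rTensor_tmul]
  exact assoc_rt n (d12 (p ⊗ₜ[F2] a))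

lemma boxMor_apply_tmul (φ : M →ₗ[F2] A2 ⊗[F2] N) (p : Pc) (m : M) :
    boxMor d12 φ (p ⊗ₜ[F2] m) = bx d12 N (p ⊗ₜ[F2] φ m) := by
  rw [boxMor_eq]; rfl

lemma boxMor_add (φ φ' : M →ₗ[F2] A2 ⊗[F2] N) :
    boxMor d12 (φ + φ') = boxMor d12 φ + boxMor d12 φ' := by
  rw [boxMor_eq, boxMor_eq, boxMor_eq, lTensor_add, comp_add]

/-- Currying `bx` in the second variable. -/
noncomputable def bxc (u : A2 ⊗[F2] N) : Pc →ₗ[F2] A1 ⊗[F2] (Pc ⊗[F2] N) :=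
  bx d12 N ∘ₗ ((TensorProduct.mk F2 Pc (A2 ⊗[F2] N)).flip u)

@[simp] lemma bxc_apply (u : A2 ⊗[F2] N) (r : Pc) :
    bxc d12 u r = bx d12 N (r ⊗ₜ[F2] u) := rfl

lemma bxc_add (u u' : A2 ⊗[F2] N) : bxc d12 (u + u') = bxc d12 u + bxc d12 u' := by
  ext r; simp [TensorProduct.tmul_add]

lemma bxc_zero : bxc d12 (0 : A2 ⊗[F2] N) = 0 := by
  ext r; simp

lemma mulT_boxMor_rt (ψ : N →ₗ[F2] A2 ⊗[F2] P) (n : N) (v : A1 ⊗[F2] Pc) :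
    mulT (boxMor d12 ψ) (rt n v) = mulT (bxc d12 (ψ n)) v := by
  induction v using TensorProduct.induction_on with
  | zero => simp
  | tmul x r => simp [boxMor_apply_tmul]
  | add u v hu hv => simp [hu, hv]

lemma mulT_boxP_rt (n : N) (v : A1 ⊗[F2] Pc) :
    mulT (boxP d11 N) (rt n v) = rt n (mulT d11 v) := by
  induction v using TensorProduct.induction_on with
  | zero => simp
  | tmul x r => simp [ml_rt]
  | add u v hu hv => simp [hu, hv]

lemma mulT_bxc_tmul (c : A2) (q : N) (v : A1 ⊗[F2] Pc) :
    mulT (bxc d12 (c ⊗ₜ[F2] q)) v = rt q (mulT d12 (rt c v)) := by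
  induction v using TensorProduct.induction_on with
  | zero => simp
  | tmul x r => simp [ml_rt]
  | add u v hu hv => simp [hu, hv]

end BoxAux

section Core

variable {A1 A2 : Type} [Ring A1] [Algebra F2 A1] [Ring A2] [Algebra F2 A2]
variable (dA1 : A1 →ₗ[F2] A1) (dA2 : A2 →ₗ[F2] A2)
variable {Pc : Type} [AddCommGroup Pc] [Module F2 Pc]
variable (d11 : Pc →ₗ[F2] A1 ⊗[F2] Pc) (d12 : Pc ⊗[F2] A2 →ₗ[F2] A1 ⊗[F2] Pc)
variable {M N P : Type}
  [AddCommGroup M] [Module F2 M] [AddCommGroup N] [Module F2 N]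
  [AddCommGroup P] [Module F2 P]

/-- Elementwise form of `hP3`. -/
lemma hP3_elt
    (hP3 : comp2 d12 ((TensorProduct.assoc F2 A1 Pc A2).toLinearMap ∘ₗ rTensor A2 d12)
      = d12 ∘ₗ lTensor Pc (mul' F2 A2) ∘ₗ (TensorProduct.assoc F2 Pc A2 A2).toLinearMap)
    (p : Pc) (a c : A2) :
    d12 (p ⊗ₜ[F2] (a * c)) = mulT d12 (rt c (d12 (p ⊗ₜ[F2] a))) := by
  have h := congrArg (fun f => f ((p ⊗ₜ[F2] a) ⊗ₜ[F2] c)) hP3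
  simp only [comp2_eq, LinearMap.comp_apply, LinearEquiv.coe_coe,
    TensorProduct.assoc_tmul, lTensor_tmul, rTensor_tmul, mul'_apply] at h
  rw [assoc_rt] at h
  exact h.symm

/-- The key `hP3` consequence. -/
lemma key3
    (hP3 : comp2 d12 ((TensorProduct.assoc F2 A1 Pc A2).toLinearMap ∘ₗ rTensor A2 d12)
      = d12 ∘ₗ lTensor Pc (mul' F2 A2) ∘ₗ (TensorProduct.assoc F2 Pc A2 A2).toLinearMap)
    (p : Pc) (a : A2) (u : A2 ⊗[F2] N) :
    mulT (bxc d12 u) (d12 (p ⊗ₜ[F2] a)) = bx d12 N (p ⊗ₜ[F2] ml a u) := by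
  induction u using TensorProduct.induction_on with
  | zero => simp [bxc_zero, mulT_zero]
  | tmul c q =>
      rw [mulT_bxc_tmul, ml_tmul, bx_tmul, ← hP3_elt d12 hP3]
  | add u v hu hv =>
      rw [bxc_add, mulT_add, map_add, LinearMap.add_apply, hu, hv,
        TensorProduct.tmul_add, map_add]

/-- Core lemma C: box of a composition. -/
lemma box_comp
    (hP3 : comp2 d12 ((TensorProduct.assoc F2 A1 Pc A2).toLinearMap ∘ₗ rTensor A2 d12)
      = d12 ∘ₗ lTensor Pc (mul' F2 A2) ∘ₗ (TensorProduct.assoc F2 Pc A2 A2).toLinearMap)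
    (ψ : N →ₗ[F2] A2 ⊗[F2] P) (φ : M →ₗ[F2] A2 ⊗[F2] N) :
    comp2 (boxMor d12 ψ) (boxMor d12 φ) = boxMor d12 (comp2 ψ φ) := by
  apply TensorProduct.ext'
  intro p m
  rw [comp2_eq, LinearMap.comp_apply, boxMor_apply_tmul, boxMor_apply_tmul,
    comp2_eq, LinearMap.comp_apply]
  generalize φ m = w
  induction w using TensorProduct.induction_on with
  | zero => simp [TensorProduct.tmul_zero]
  | tmul a n =>
      rw [bx_tmul, mulT_boxMor_rt, key3 d12 hP3, mulT_tmul]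
  | add u v hu hv =>
      rw [TensorProduct.tmul_add, map_add, map_add, hu, hv, map_add,
        TensorProduct.tmul_add, map_add]

/-- Core lemma A: the `d11`-part squares to `dA1`-commutator zero. -/
lemma boxP_sq
    (hP1 : comp2 d11 d11 + rTensor Pc dA1 ∘ₗ d11 = 0) :
    comp2 (boxP d11 N) (boxP d11 N)
      + rTensor (Pc ⊗[F2] N) dA1 ∘ₗ boxP d11 N = 0 := by
  apply TensorProduct.ext'
  intro p n
  have h := congrArg (fun f => f p) hP1
  simp only [LinearMap.add_apply, LinearMap.comp_apply, LinearMap.zero_apply,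
    comp2_eq] at h ⊢
  rw [boxP_tmul, mulT_boxP_rt, rT_rt, ← map_add, h, map_zero]

/-- Core lemma B: Leibniz rule for the box of a morphism. -/
lemma box_leibniz
    (hP2 : comp2 d11 d12
        + comp2 d12 ((TensorProduct.assoc F2 A1 Pc A2).toLinearMap ∘ₗ rTensor A2 d11)
        + d12 ∘ₗ lTensor Pc dA2 + rTensor Pc dA1 ∘ₗ d12 = 0)
    (φ : M →ₗ[F2] A2 ⊗[F2] N) :
    comp2 (boxP d11 N) (boxMor d12 φ) + comp2 (boxMor d12 φ) (boxP d11 M)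
      + rTensor (Pc ⊗[F2] N) dA1 ∘ₗ boxMor d12 φ
      = boxMor d12 (rTensor N dA2 ∘ₗ φ) := by
  apply TensorProduct.ext'
  intro p m
  simp only [LinearMap.add_apply, LinearMap.comp_apply, comp2_eq]
  rw [boxMor_apply_tmul, boxMor_apply_tmul, boxP_tmul, mulT_boxMor_rt,
    LinearMap.comp_apply]
  generalize φ m = w
  induction w using TensorProduct.induction_on with
  | zero => simp [TensorProduct.tmul_zero, bxc_zero, mulT_zero]
  | tmul a n =>
      have h := congrArg (fun f => f (p ⊗ₜ[F2] a)) hP2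
      simp only [LinearMap.add_apply, LinearMap.comp_apply, LinearMap.zero_apply,
        comp2_eq, lTensor_tmul, rTensor_tmul, LinearEquiv.coe_coe,
        TensorProduct.assoc_tmul] at h
      rw [assoc_rt] at h
      -- h : mulT d12 (d11??) ... rearrange in char 2
      have h2 : mulT d11 (d12 (p ⊗ₜ[F2] a)) + mulT d12 (rt a (d11 p))
          + rTensor Pc dA1 (d12 (p ⊗ₜ[F2] a)) = d12 (p ⊗ₜ[F2] dA2 a) := by
        have h4 : (mulT d11) (d12 (p ⊗ₜ[F2] a)) + (mulT d12) ((rt a) (d11 p))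
            + d12 (p ⊗ₜ[F2] dA2 a) + rTensor Pc dA1 (d12 (p ⊗ₜ[F2] a)) = 0 := h
        exact char2_solve h4
      rw [bx_tmul, rTensor_tmul, bx_tmul, mulT_boxP_rt, mulT_bxc_tmul, rT_rt,
        ← map_add, ← map_add, h2]
  | add u v hu hv =>
      rw [TensorProduct.tmul_add, map_add, map_add, map_add, bxc_add, mulT_add,
        LinearMap.add_apply, map_add, TensorProduct.tmul_add, map_add, ← hu, ← hv]
      abel

end Core

section BoxFunctor

variable {A1 A2 : Type} [Ring A1] [Algebra F2 A1] [Ring A2] [Algebra F2 A2]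
variable {dA1 : A1 →ₗ[F2] A1} {dA2 : A2 →ₗ[F2] A2}
variable {Pc : Type} [AddCommGroup Pc] [Module F2 Pc]
variable {d11 : Pc →ₗ[F2] A1 ⊗[F2] Pc} {d12 : Pc ⊗[F2] A2 →ₗ[F2] A1 ⊗[F2] Pc}
variable (hP1 : comp2 d11 d11 + rTensor Pc dA1 ∘ₗ d11 = 0)
variable (hP2 : comp2 d11 d12
    + comp2 d12 ((TensorProduct.assoc F2 A1 Pc A2).toLinearMap ∘ₗ rTensor A2 d11)
    + d12 ∘ₗ lTensor Pc dA2 + rTensor Pc dA1 ∘ₗ d12 = 0)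
variable (hP3 : comp2 d12 ((TensorProduct.assoc F2 A1 Pc A2).toLinearMap ∘ₗ rTensor A2 d12)
    = d12 ∘ₗ lTensor Pc (mul' F2 A2) ∘ₗ (TensorProduct.assoc F2 Pc A2 A2).toLinearMap)
variable {M N : Type} [AddCommGroup M] [Module F2 M] [AddCommGroup N] [Module F2 N]

include hP1 hP2 hP3

/-- The box differential operator on morphisms commutes with `boxMor`. -/
lemma box_der (δM : M →ₗ[F2] A2 ⊗[F2] M) (δN : N →ₗ[F2] A2 ⊗[F2] N)
    (φ : M →ₗ[F2] A2 ⊗[F2] N) :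
    comp2 (boxδ d11 d12 δN) (boxMor d12 φ) + comp2 (boxMor d12 φ) (boxδ d11 d12 δM)
      + rTensor (Pc ⊗[F2] N) dA1 ∘ₗ boxMor d12 φ
    = boxMor d12 (comp2 δN φ + comp2 φ δM + rTensor N dA2 ∘ₗ φ) := by
  rw [boxδ_eq, boxδ_eq, comp2_add_left, comp2_add_right,
    box_comp d12 hP3, box_comp d12 hP3, boxMor_add, boxMor_add,
    ← box_leibniz dA1 dA2 d11 d12 hP2 φ]
  abel

lemma box_typeD {δ : N →ₗ[F2] A2 ⊗[F2] N} (h : IsTypeD dA2 δ) :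
    IsTypeD dA1 (boxδ d11 d12 δ) := by
  unfold IsTypeD at h ⊢
  rw [boxδ_eq, comp2_add_left, comp2_add_right, comp2_add_right, comp_add,
    box_comp d12 hP3]
  have hb := boxP_sq dA1 d11 (N := N) hP1
  have hl := box_leibniz dA1 dA2 d11 d12 hP2 δ
  have : boxMor d12 (comp2 δ δ) + boxMor d12 (rTensor N dA2 ∘ₗ δ) = 0 := by
    rw [← boxMor_add, h]
    have : boxMor (A1 := A1) d12 (0 : N →ₗ[F2] A2 ⊗[F2] N) = 0 := by
      rw [boxMor_eq]; simp
    exact this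
  rw [← hl] at this
  have hsum := congrArg₂ (· + ·) hb this
  simp only [add_zero] at hsum
  rw [← hsum]
  abel

lemma box_mor {δM : M →ₗ[F2] A2 ⊗[F2] M} {δN : N →ₗ[F2] A2 ⊗[F2] N}
    {φ : M →ₗ[F2] A2 ⊗[F2] N} (h : IsDMor dA2 δM δN φ) :
    IsDMor dA1 (boxδ d11 d12 δM) (boxδ d11 d12 δN) (boxMor d12 φ) := by
  unfold IsDMor at h ⊢
  rw [box_der hP1 hP2 hP3, h]
  rw [boxMor_eq]; simp

lemma box_htpy {δM : M →ₗ[F2] A2 ⊗[F2] M} {δN : N →ₗ[F2] A2 ⊗[F2] N}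
    {φ φ' ν : M →ₗ[F2] A2 ⊗[F2] N} (h : IsDHtpy dA2 δM δN φ φ' ν) :
    IsDHtpy dA1 (boxδ d11 d12 δM) (boxδ d11 d12 δN)
      (boxMor d12 φ) (boxMor d12 φ') (boxMor d12 ν) := by
  unfold IsDHtpy at h ⊢
  rw [box_der hP1 hP2 hP3, ← h, boxMor_add]

/-- Box of a "relative morphism" relation (used for `hf`, `hh` conditions). -/
lemma box_rel {δM : M →ₗ[F2] A2 ⊗[F2] M} {δN : N →ₗ[F2] A2 ⊗[F2] N}
    {f : M →ₗ[F2] A2 ⊗[F2] N} {g : M →ₗ[F2] A2 ⊗[F2] N} {t : M →ₗ[F2] A2 ⊗[F2] N}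
    (h : f + g = comp2 δN t + comp2 t δM + rTensor N dA2 ∘ₗ t) :
    boxMor d12 f + boxMor d12 g
      = comp2 (boxδ d11 d12 δN) (boxMor d12 t) + comp2 (boxMor d12 t) (boxδ d11 d12 δM)
        + rTensor (Pc ⊗[F2] N) dA1 ∘ₗ boxMor d12 t := by
  rw [box_der hP1 hP2 hP3, ← h, boxMor_add]

end BoxFunctor

section Conj

variable {A : Type} [Ring A] [Algebra F2 A]
variable {M M' N N' P P' Q Q' : Type}
  [AddCommGroup M] [Module F2 M] [AddCommGroup M'] [Module F2 M']
  [AddCommGroup N] [Module F2 N] [AddCommGroup N'] [Module F2 N']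
  [AddCommGroup P] [Module F2 P] [AddCommGroup P'] [Module F2 P']
  [AddCommGroup Q] [Module F2 Q] [AddCommGroup Q'] [Module F2 Q']

/-- Conjugation of a coefficient-type map by linear equivalences. -/
noncomputable def cj (eM : M ≃ₗ[F2] M') (eN : N ≃ₗ[F2] N')
    (φ : M →ₗ[F2] A ⊗[F2] N) : M' →ₗ[F2] A ⊗[F2] N' :=
  lTensor A eN.toLinearMap ∘ₗ φ ∘ₗ eM.symm.toLinearMap

lemma cj_add (eM : M ≃ₗ[F2] M') (eN : N ≃ₗ[F2] N') (φ φ' : M →ₗ[F2] A ⊗[F2] N) :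
    cj eM eN (φ + φ') = cj eM eN φ + cj eM eN φ' := by
  simp [cj, add_comp, comp_add]

lemma cj_zero (eM : M ≃ₗ[F2] M') (eN : N ≃ₗ[F2] N') :
    cj eM eN (0 : M →ₗ[F2] A ⊗[F2] N) = 0 := by
  simp [cj]

lemma cj_cj (eM : M ≃ₗ[F2] M') (eN : N ≃ₗ[F2] N') (eM' : M' ≃ₗ[F2] P)
    (eN' : N' ≃ₗ[F2] P') (φ : M →ₗ[F2] A ⊗[F2] N) :
    cj eM' eN' (cj eM eN φ) = cj (eM.trans eM') (eN.trans eN') φ := by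
  apply LinearMap.ext
  intro x
  simp only [cj, LinearMap.comp_apply, LinearEquiv.coe_coe, LinearEquiv.trans_symm,
    LinearEquiv.trans_apply]
  generalize φ (eM.symm (eM'.symm x)) = w
  induction w using TensorProduct.induction_on with
  | zero => simp
  | tmul a n => simp
  | add u v hu hv => simp only [map_add, hu, hv]

lemma cj_comp2 (eM : M ≃ₗ[F2] M') (eN : N ≃ₗ[F2] N') (eP : P ≃ₗ[F2] P')
    (ψ : N →ₗ[F2] A ⊗[F2] P) (φ : M →ₗ[F2] A ⊗[F2] N) :
    comp2 (cj eN eP ψ) (cj eM eN φ) = cj eM eP (comp2 ψ φ) := by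
  apply LinearMap.ext
  intro m'
  simp only [comp2_eq, cj, LinearMap.comp_apply]
  generalize φ (eM.symm m') = w
  induction w using TensorProduct.induction_on with
  | zero => simp
  | tmul a n =>
      simp only [lTensor_tmul, mulT_tmul, LinearEquiv.coe_coe,
        LinearMap.comp_apply, LinearEquiv.symm_apply_apply]
      generalize ψ n = u
      induction u using TensorProduct.induction_on with
      | zero => simp
      | tmul b p => simp
      | add u v hu hv => simp [hu, hv]
  | add u v hu hv => simp [hu, hv]

lemma cj_rT (dA : A →ₗ[F2] A) (eM : M ≃ₗ[F2] M') (eN : N ≃ₗ[F2] N')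
    (φ : M →ₗ[F2] A ⊗[F2] N) :
    rTensor N' dA ∘ₗ cj eM eN φ = cj eM eN (rTensor N dA ∘ₗ φ) := by
  apply LinearMap.ext
  intro m'
  simp only [cj, LinearMap.comp_apply]
  generalize φ (eM.symm m') = w
  induction w using TensorProduct.induction_on with
  | zero => simp
  | tmul a n => simp
  | add u v hu hv => simp [hu, hv]

variable (dA : A →ₗ[F2] A)

lemma cj_isDMor {δM : M →ₗ[F2] A ⊗[F2] M} {δN : N →ₗ[F2] A ⊗[F2] N}
    {φ : M →ₗ[F2] A ⊗[F2] N} (eM : M ≃ₗ[F2] M') (eN : N ≃ₗ[F2] N')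
    (h : IsDMor dA δM δN φ) :
    IsDMor dA (cj eM eM δM) (cj eN eN δN) (cj eM eN φ) := by
  unfold IsDMor at h ⊢
  rw [cj_comp2, cj_comp2, cj_rT, ← cj_add, ← cj_add, h, cj_zero]

lemma cj_isDHtpy {δM : M →ₗ[F2] A ⊗[F2] M} {δN : N →ₗ[F2] A ⊗[F2] N}
    {φ φ' ν : M →ₗ[F2] A ⊗[F2] N} (eM : M ≃ₗ[F2] M') (eN : N ≃ₗ[F2] N')
    (h : IsDHtpy dA δM δN φ φ' ν) :
    IsDHtpy dA (cj eM eM δM) (cj eN eN δN) (cj eM eN φ) (cj eM eN φ') (cj eM eN ν) := by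
  unfold IsDHtpy at h ⊢
  rw [cj_comp2, cj_comp2, cj_rT, ← cj_add, ← cj_add, ← cj_add, h]

/-- `cj` of a triangular map is the triangular map of the `cj`s. -/
lemma cj_dbold (e0 : M ≃ₗ[F2] M') (e1 : N ≃ₗ[F2] N') (f0 : P ≃ₗ[F2] P')
    (f1 : Q ≃ₗ[F2] Q') (a : M →ₗ[F2] A ⊗[F2] P) (b : N →ₗ[F2] A ⊗[F2] Q)
    (c : M →ₗ[F2] A ⊗[F2] Q) :
    cj (e0.prodCongr e1) (f0.prodCongr f1) (dbold a b c)
      = dbold (cj e0 f0 a) (cj e1 f1 b) (cj e0 f1 c) := by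
  unfold dbold
  rw [cj_add, cj_add]
  congr 1
  · congr 1
    · -- hat0
      apply LinearMap.ext
      rintro ⟨m', n'⟩
      simp only [cj, hat0, LinearMap.comp_apply, LinearMap.fst_apply,
        LinearEquiv.coe_coe, LinearEquiv.prodCongr_symm, LinearEquiv.prodCongr_apply]
      generalize a (e0.symm m') = w
      induction w using TensorProduct.induction_on with
      | zero => simp
      | tmul x p => simp
      | add u v hu hv => simp only [map_add, hu, hv]
    · -- hat1
      apply LinearMap.ext
      rintro ⟨m', n'⟩
      simp only [cj, hat1, LinearMap.comp_apply, LinearMap.snd_apply,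
        LinearEquiv.coe_coe, LinearEquiv.prodCongr_symm, LinearEquiv.prodCongr_apply]
      generalize b (e1.symm n') = w
      induction w using TensorProduct.induction_on with
      | zero => simp
      | tmul x q => simp
      | add u v hu hv => simp only [map_add, hu, hv]
  · -- hatf
    apply LinearMap.ext
    rintro ⟨m', n'⟩
    simp only [cj, hatf, LinearMap.comp_apply, LinearMap.fst_apply,
      LinearEquiv.coe_coe, LinearEquiv.prodCongr_symm, LinearEquiv.prodCongr_apply]
    generalize c (e0.symm m') = w
    induction w using TensorProduct.induction_on with
    | zero => simp
    | tmul x q => simp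
    | add u v hu hv => simp only [map_add, hu, hv]

end Conj

section ProdBox

variable {A1 A2 : Type} [Ring A1] [Algebra F2 A1] [Ring A2] [Algebra F2 A2]
variable {Pc : Type} [AddCommGroup Pc] [Module F2 Pc]
variable {d11 : Pc →ₗ[F2] A1 ⊗[F2] Pc} {d12 : Pc ⊗[F2] A2 →ₗ[F2] A1 ⊗[F2] Pc}
variable {C0 C1 C0' C1' : Type}
  [AddCommGroup C0] [Module F2 C0] [AddCommGroup C1] [Module F2 C1]
  [AddCommGroup C0'] [Module F2 C0'] [AddCommGroup C1'] [Module F2 C1']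

/-- Abbreviation for the canonical splitting equivalence. -/
noncomputable def pR (C0 C1 : Type) [AddCommGroup C0] [Module F2 C0]
    [AddCommGroup C1] [Module F2 C1] :
    Pc ⊗[F2] (C0 × C1) ≃ₗ[F2] (Pc ⊗[F2] C0) × (Pc ⊗[F2] C1) :=
  TensorProduct.prodRight F2 F2 Pc C0 C1

lemma boxCone_eq_cj (ψ : C0 × C1 →ₗ[F2] A2 ⊗[F2] (C0' × C1')) :
    boxCone d12 ψ = cj (pR C0 C1) (pR C0' C1') (boxMor d12 ψ) := rfl

lemma lT_pR_bx_inl (p : Pc) (u : A2 ⊗[F2] C0') :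
    lTensor A1 (pR (Pc := Pc) C0' C1').toLinearMap
        (bx d12 (C0' × C1') (p ⊗ₜ[F2] lTensor A2 (inl F2 C0' C1') u))
      = lTensor A1 (inl F2 (Pc ⊗[F2] C0') (Pc ⊗[F2] C1'))
          (bx d12 C0' (p ⊗ₜ[F2] u)) := by
  induction u using TensorProduct.induction_on with
  | zero => simp
  | tmul b c =>
      simp only [lTensor_tmul, inl_apply, bx_tmul]
      generalize d12 (p ⊗ₜ[F2] b) = v
      induction v using TensorProduct.induction_on with
      | zero => simp
      | tmul x r => simp [pR]
      | add u' v' hu hv => simp only [map_add, hu, hv]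
  | add u v hu hv =>
      simp only [TensorProduct.tmul_add, map_add] at hu hv ⊢
      rw [hu, hv]

lemma lT_pR_bx_inr (p : Pc) (u : A2 ⊗[F2] C1') :
    lTensor A1 (pR (Pc := Pc) C0' C1').toLinearMap
        (bx d12 (C0' × C1') (p ⊗ₜ[F2] lTensor A2 (inr F2 C0' C1') u))
      = lTensor A1 (inr F2 (Pc ⊗[F2] C0') (Pc ⊗[F2] C1'))
          (bx d12 C1' (p ⊗ₜ[F2] u)) := by
  induction u using TensorProduct.induction_on with
  | zero => simp
  | tmul b c =>
      simp only [lTensor_tmul, inr_apply, bx_tmul]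
      generalize d12 (p ⊗ₜ[F2] b) = v
      induction v using TensorProduct.induction_on with
      | zero => simp
      | tmul x r => simp [pR]
      | add u' v' hu hv => simp only [map_add, hu, hv]
  | add u v hu hv =>
      simp only [TensorProduct.tmul_add, map_add] at hu hv ⊢
      rw [hu, hv]

lemma lT_fst_pRsymm (w : (Pc ⊗[F2] C0) × (Pc ⊗[F2] C1)) :
    lTensor Pc (fst F2 C0 C1) ((pR C0 C1).symm w) = w.1 := by
  have : lTensor Pc (fst F2 C0 C1) ∘ₗ (pR (Pc := Pc) C0 C1).symm.toLinearMap
      = fst F2 (Pc ⊗[F2] C0) (Pc ⊗[F2] C1) := by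
    rw [LinearEquiv.comp_toLinearMap_symm_eq]
    apply TensorProduct.ext'
    rintro p ⟨c0, c1⟩
    simp [pR]
  exact congrArg (fun f => f w) this

lemma lT_snd_pRsymm (w : (Pc ⊗[F2] C0) × (Pc ⊗[F2] C1)) :
    lTensor Pc (snd F2 C0 C1) ((pR C0 C1).symm w) = w.2 := by
  have : lTensor Pc (snd F2 C0 C1) ∘ₗ (pR (Pc := Pc) C0 C1).symm.toLinearMap
      = snd F2 (Pc ⊗[F2] C0) (Pc ⊗[F2] C1) := by
    rw [LinearEquiv.comp_toLinearMap_symm_eq]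
    apply TensorProduct.ext'
    rintro p ⟨c0, c1⟩
    simp [pR]
  exact congrArg (fun f => f w) this

lemma lT_pR_bx_inl' (z : Pc ⊗[F2] (A2 ⊗[F2] C0')) :
    lTensor A1 (pR (Pc := Pc) C0' C1').toLinearMap
        (bx d12 (C0' × C1') (lTensor Pc (lTensor A2 (inl F2 C0' C1')) z))
      = lTensor A1 (inl F2 (Pc ⊗[F2] C0') (Pc ⊗[F2] C1')) (bx d12 C0' z) := by
  induction z using TensorProduct.induction_on with
  | zero => simp
  | tmul p u => exact lT_pR_bx_inl p u
  | add u v hu hv => simp only [map_add, hu, hv]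

lemma lT_pR_bx_inr' (z : Pc ⊗[F2] (A2 ⊗[F2] C1')) :
    lTensor A1 (pR (Pc := Pc) C0' C1').toLinearMap
        (bx d12 (C0' × C1') (lTensor Pc (lTensor A2 (inr F2 C0' C1')) z))
      = lTensor A1 (inr F2 (Pc ⊗[F2] C0') (Pc ⊗[F2] C1')) (bx d12 C1' z) := by
  induction z using TensorProduct.induction_on with
  | zero => simp
  | tmul p u => exact lT_pR_bx_inr p u
  | add u v hu hv => simp only [map_add, hu, hv]

lemma box_hat0 (a : C0 →ₗ[F2] A2 ⊗[F2] C0') :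
    boxCone d12 (hat0 (Q := C1) (Q' := C1') a) = hat0 (boxMor d12 a) := by
  rw [boxCone_eq_cj]
  apply LinearMap.ext
  intro w
  show lTensor A1 (pR (Pc := Pc) C0' C1').toLinearMap
      (boxMor d12 (hat0 a) ((pR C0 C1).symm w)) = _
  rw [boxMor_eq]
  have hlt : lTensor Pc (hat0 (Q := C1) (Q' := C1') a) ((pR C0 C1).symm w)
      = lTensor Pc (lTensor A2 (inl F2 C0' C1'))
          (lTensor Pc a (lTensor Pc (fst F2 C0 C1) ((pR C0 C1).symm w))) := by
    rw [show hat0 (Q := C1) (Q' := C1') a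
        = lTensor A2 (inl F2 C0' C1') ∘ₗ a ∘ₗ fst F2 C0 C1 from rfl]
    rw [lTensor_comp, lTensor_comp]
    rfl
  rw [LinearMap.comp_apply, hlt, lT_fst_pRsymm, lT_pR_bx_inl']
  show _ = (lTensor A1 (inl F2 (Pc ⊗[F2] C0') (Pc ⊗[F2] C1')))
      (boxMor d12 a w.1)
  rw [boxMor_eq]
  rfl

lemma box_hat1 (b : C1 →ₗ[F2] A2 ⊗[F2] C1') :
    boxCone d12 (hat1 (P := C0) (P' := C0') b) = hat1 (boxMor d12 b) := by
  rw [boxCone_eq_cj]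
  apply LinearMap.ext
  intro w
  show lTensor A1 (pR (Pc := Pc) C0' C1').toLinearMap
      (boxMor d12 (hat1 b) ((pR C0 C1).symm w)) = _
  rw [boxMor_eq]
  have hlt : lTensor Pc (hat1 (P := C0) (P' := C0') b) ((pR C0 C1).symm w)
      = lTensor Pc (lTensor A2 (inr F2 C0' C1'))
          (lTensor Pc b (lTensor Pc (snd F2 C0 C1) ((pR C0 C1).symm w))) := by
    rw [show hat1 (P := C0) (P' := C0') b
        = lTensor A2 (inr F2 C0' C1') ∘ₗ b ∘ₗ snd F2 C0 C1 from rfl]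
    rw [lTensor_comp, lTensor_comp]
    rfl
  rw [LinearMap.comp_apply, hlt, lT_snd_pRsymm, lT_pR_bx_inr']
  show _ = (lTensor A1 (inr F2 (Pc ⊗[F2] C0') (Pc ⊗[F2] C1')))
      (boxMor d12 b w.2)
  rw [boxMor_eq]
  rfl

lemma box_hatf (c : C0 →ₗ[F2] A2 ⊗[F2] C1') :
    boxCone d12 (hatf (Q := C1) (P' := C0') c) = hatf (boxMor d12 c) := by
  rw [boxCone_eq_cj]
  apply LinearMap.ext
  intro w
  show lTensor A1 (pR (Pc := Pc) C0' C1').toLinearMap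
      (boxMor d12 (hatf c) ((pR C0 C1).symm w)) = _
  rw [boxMor_eq]
  have hlt : lTensor Pc (hatf (Q := C1) (P' := C0') c) ((pR C0 C1).symm w)
      = lTensor Pc (lTensor A2 (inr F2 C0' C1'))
          (lTensor Pc c (lTensor Pc (fst F2 C0 C1) ((pR C0 C1).symm w))) := by
    rw [show hatf (Q := C1) (P' := C0') c
        = lTensor A2 (inr F2 C0' C1') ∘ₗ c ∘ₗ fst F2 C0 C1 from rfl]
    rw [lTensor_comp, lTensor_comp]
    rfl
  rw [LinearMap.comp_apply, hlt, lT_fst_pRsymm, lT_pR_bx_inr']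
  show _ = (lTensor A1 (inr F2 (Pc ⊗[F2] C0') (Pc ⊗[F2] C1')))
      (boxMor d12 c w.1)
  rw [boxMor_eq]
  rfl

lemma box_dbold (a : C0 →ₗ[F2] A2 ⊗[F2] C0') (b : C1 →ₗ[F2] A2 ⊗[F2] C1')
    (c : C0 →ₗ[F2] A2 ⊗[F2] C1') :
    boxCone d12 (dbold a b c)
      = dbold (boxMor d12 a) (boxMor d12 b) (boxMor d12 c) := by
  unfold dbold
  rw [boxCone_eq_cj, boxMor_add, boxMor_add, cj_add, cj_add,
    ← boxCone_eq_cj, ← boxCone_eq_cj, ← boxCone_eq_cj,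
    box_hat0, box_hat1, box_hatf]

lemma boxP_pair :
    cj (pR (Pc := Pc) C0 C1) (pR C0 C1) (boxP (A1 := A1) d11 (C0 × C1))
      = hat0 (boxP d11 C0) + hat1 (boxP d11 C1) := by
  have hsur : Function.Surjective ((pR (Pc := Pc) C0 C1).toLinearMap) :=
    (pR C0 C1).surjective
  rw [← LinearMap.cancel_right hsur]
  apply TensorProduct.ext'
  rintro p ⟨c0, c1⟩
  simp only [cj, LinearMap.comp_apply, LinearEquiv.coe_coe,
    LinearEquiv.symm_apply_apply, boxP_tmul, LinearMap.add_apply]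
  have h1 : (pR (Pc := Pc) C0 C1) (p ⊗ₜ[F2] (c0, c1))
      = (p ⊗ₜ[F2] c0, p ⊗ₜ[F2] c1) := by simp [pR]
  rw [h1]
  simp only [hat0, hat1, LinearMap.comp_apply, fst_apply, snd_apply,
    boxP_tmul]
  generalize d11 p = v
  induction v using TensorProduct.induction_on with
  | zero => simp
  | tmul x r =>
      simp only [rt_tmul, lTensor_tmul, inl_apply, inr_apply, pR,
        TensorProduct.prodRight_tmul, LinearEquiv.coe_coe]
      rw [show ((r ⊗ₜ[F2] c0 : Pc ⊗[F2] C0), (r ⊗ₜ[F2] c1 : Pc ⊗[F2] C1))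
          = ((r ⊗ₜ[F2] c0, (0 : Pc ⊗[F2] C1))
            + ((0 : Pc ⊗[F2] C0), r ⊗ₜ[F2] c1)) from by simp,
        TensorProduct.tmul_add]
  | add u v hu hv => simp only [map_add, hu, hv]; abel

lemma hat0_add' {P P' Q Q' : Type} [AddCommGroup P] [Module F2 P]
    [AddCommGroup P'] [Module F2 P'] [AddCommGroup Q] [Module F2 Q]
    [AddCommGroup Q'] [Module F2 Q'] (φ φ' : P →ₗ[F2] A1 ⊗[F2] P') :
    hat0 (Q := Q) (Q' := Q') (φ + φ') = hat0 φ + hat0 φ' := by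
  simp [hat0, add_comp, comp_add]

lemma hat1_add' {P P' Q Q' : Type} [AddCommGroup P] [Module F2 P]
    [AddCommGroup P'] [Module F2 P'] [AddCommGroup Q] [Module F2 Q]
    [AddCommGroup Q'] [Module F2 Q'] (φ φ' : Q →ₗ[F2] A1 ⊗[F2] Q') :
    hat1 (P := P) (P' := P') (φ + φ') = hat1 φ + hat1 φ' := by
  simp [hat1, add_comp, comp_add]

/-- Box of the structure map of a mapping cone. -/
lemma box_dboldδ (δ0 : C0 →ₗ[F2] A2 ⊗[F2] C0) (δ1 : C1 →ₗ[F2] A2 ⊗[F2] C1)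
    (Df : C0 →ₗ[F2] A2 ⊗[F2] C1) :
    dbold (boxδ d11 d12 δ0) (boxδ d11 d12 δ1) (boxMor d12 Df)
      = cj (pR (Pc := Pc) C0 C1) (pR C0 C1) (boxδ d11 d12 (dbold δ0 δ1 Df)) := by
  rw [boxδ_eq d11 d12 (dbold δ0 δ1 Df), cj_add, boxP_pair, ← boxCone_eq_cj,
    box_dbold, boxδ_eq, boxδ_eq]
  unfold dbold
  rw [hat0_add', hat1_add']
  abel

end ProdBox
theorem stmt16 {A1 A2 : Type} [Ring A1] [Algebra F2 A1] [Ring A2] [Algebra F2 A2]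
    (dA1 : A1 →ₗ[F2] A1)
    (hL1 : ∀ a b : A1, dA1 (a * b) = dA1 a * b + a * dA1 b) (hd1 : dA1 ∘ₗ dA1 = 0)
    (dA2 : A2 →ₗ[F2] A2)
    (hL2 : ∀ a b : A2, dA2 (a * b) = dA2 a * b + a * dA2 b) (hd2 : dA2 ∘ₗ dA2 = 0)
    -- a DA bimodule P over (A₁, A₂), via its actions δ¹₁ and δ¹₂:
    {Pc : Type} [AddCommGroup Pc] [Module F2 Pc]
    (d11 : Pc →ₗ[F2] A1 ⊗[F2] Pc) (d12 : Pc ⊗[F2] A2 →ₗ[F2] A1 ⊗[F2] Pc)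
    -- the DA structure relations:
    (hP1 : comp2 d11 d11 + rTensor Pc dA1 ∘ₗ d11 = 0)
    (hP2 : comp2 d11 d12
        + comp2 d12 ((TensorProduct.assoc F2 A1 Pc A2).toLinearMap ∘ₗ rTensor A2 d11)
        + d12 ∘ₗ lTensor Pc dA2 + rTensor Pc dA1 ∘ₗ d12 = 0)
    (hP3 : comp2 d12 ((TensorProduct.assoc F2 A1 Pc A2).toLinearMap ∘ₗ rTensor A2 d12)
        = d12 ∘ₗ lTensor Pc (mul' F2 A2) ∘ₗ (TensorProduct.assoc F2 Pc A2 A2).toLinearMap)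
    (hP4 : d12 ∘ₗ ((TensorProduct.mk F2 Pc A2).flip 1) = idD A1 Pc)
    -- a typewriter M in type D structures over A₂:
    (X : TWOb A2 dA2) :
    -- P ⊠ M is a typewriter in type D structures over A₁:
    (IsTypeD dA1 (boxδ d11 d12 X.δ0) ∧ IsTypeD dA1 (boxδ d11 d12 X.δ1) ∧
     IsDMor dA1 (boxδ d11 d12 X.δ0) (boxδ d11 d12 X.δ1) (boxMor d12 X.Df) ∧
     IsDMor dA1 (boxδ d11 d12 X.δ0) (boxδ d11 d12 X.δ1) (boxMor d12 X.Dh) ∧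
     IsDMor dA1
       (dbold (boxδ d11 d12 X.δ0) (boxδ d11 d12 X.δ1) (boxMor d12 X.Df))
       (dbold (boxδ d11 d12 X.δ0) (boxδ d11 d12 X.δ1) (boxMor d12 X.Dh))
       (boxCone d12 X.DCR)) ∧
    -- P ⊠ (·) sends morphisms of typewriters to morphisms of typewriters:
    (∀ (Y : TWOb A2 dA2) (T : TWHom X Y),
      IsDMor dA1 (boxδ d11 d12 X.δ0) (boxδ d11 d12 Y.δ0) (boxMor d12 T.t0) ∧
      IsDMor dA1 (boxδ d11 d12 X.δ1) (boxδ d11 d12 Y.δ1) (boxMor d12 T.t1) ∧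
      (comp2 (boxMor d12 T.t1) (boxMor d12 X.Df)
          + comp2 (boxMor d12 Y.Df) (boxMor d12 T.t0)
        = comp2 (boxδ d11 d12 Y.δ1) (boxMor d12 T.tf)
          + comp2 (boxMor d12 T.tf) (boxδ d11 d12 X.δ0)
          + rTensor (Pc ⊗[F2] Y.C1) dA1 ∘ₗ boxMor d12 T.tf) ∧
      (comp2 (boxMor d12 T.t1) (boxMor d12 X.Dh)
          + comp2 (boxMor d12 Y.Dh) (boxMor d12 T.t0)
        = comp2 (boxδ d11 d12 Y.δ1) (boxMor d12 T.th)
          + comp2 (boxMor d12 T.th) (boxδ d11 d12 X.δ0)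
          + rTensor (Pc ⊗[F2] Y.C1) dA1 ∘ₗ boxMor d12 T.th) ∧
      (comp2 (dbold (boxMor d12 T.t0) (boxMor d12 T.t1) (boxMor d12 T.th))
            (boxCone d12 X.DCR)
          + comp2 (boxCone d12 Y.DCR)
            (dbold (boxMor d12 T.t0) (boxMor d12 T.t1) (boxMor d12 T.tf))
        = comp2 (dbold (boxδ d11 d12 Y.δ0) (boxδ d11 d12 Y.δ1) (boxMor d12 Y.Dh))
            (boxCone d12 T.tcr)
          + comp2 (boxCone d12 T.tcr)
            (dbold (boxδ d11 d12 X.δ0) (boxδ d11 d12 X.δ1) (boxMor d12 X.Df))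
          + rTensor ((Pc ⊗[F2] Y.C0) × (Pc ⊗[F2] Y.C1)) dA1 ∘ₗ boxCone d12 T.tcr)) ∧
    -- and sends homotopies of typewriter morphisms to homotopies (hence
    -- homotopy equivalences to homotopy equivalences):
    (∀ (Y : TWOb A2 dA2) (S T : TWHom X Y) (H : TWHtpy S T),
      IsDHtpy dA1 (boxδ d11 d12 X.δ0) (boxδ d11 d12 Y.δ0)
        (boxMor d12 S.t0) (boxMor d12 T.t0) (boxMor d12 H.k0) ∧
      IsDHtpy dA1 (boxδ d11 d12 X.δ1) (boxδ d11 d12 Y.δ1)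
        (boxMor d12 S.t1) (boxMor d12 T.t1) (boxMor d12 H.k1) ∧
      IsDHtpy dA1
        (dbold (boxδ d11 d12 X.δ0) (boxδ d11 d12 X.δ1) (boxMor d12 X.Df))
        (dbold (boxδ d11 d12 Y.δ0) (boxδ d11 d12 Y.δ1) (boxMor d12 Y.Df))
        (dbold (boxMor d12 S.t0) (boxMor d12 S.t1) (boxMor d12 S.tf))
        (dbold (boxMor d12 T.t0) (boxMor d12 T.t1) (boxMor d12 T.tf))
        (dbold (boxMor d12 H.k0) (boxMor d12 H.k1) (boxMor d12 H.kf)) ∧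
      IsDHtpy dA1
        (dbold (boxδ d11 d12 X.δ0) (boxδ d11 d12 X.δ1) (boxMor d12 X.Dh))
        (dbold (boxδ d11 d12 Y.δ0) (boxδ d11 d12 Y.δ1) (boxMor d12 Y.Dh))
        (dbold (boxMor d12 S.t0) (boxMor d12 S.t1) (boxMor d12 S.th))
        (dbold (boxMor d12 T.t0) (boxMor d12 T.t1) (boxMor d12 T.th))
        (dbold (boxMor d12 H.k0) (boxMor d12 H.k1) (boxMor d12 H.kh)) ∧
      IsDHtpy dA1
        (dbold (dbold (boxδ d11 d12 X.δ0) (boxδ d11 d12 X.δ1) (boxMor d12 X.Df))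
          (dbold (boxδ d11 d12 X.δ0) (boxδ d11 d12 X.δ1) (boxMor d12 X.Dh))
          (boxCone d12 X.DCR))
        (dbold (dbold (boxδ d11 d12 Y.δ0) (boxδ d11 d12 Y.δ1) (boxMor d12 Y.Df))
          (dbold (boxδ d11 d12 Y.δ0) (boxδ d11 d12 Y.δ1) (boxMor d12 Y.Dh))
          (boxCone d12 Y.DCR))
        (dbold (dbold (boxMor d12 S.t0) (boxMor d12 S.t1) (boxMor d12 S.tf))
          (dbold (boxMor d12 S.t0) (boxMor d12 S.t1) (boxMor d12 S.th))
          (boxCone d12 S.tcr))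
        (dbold (dbold (boxMor d12 T.t0) (boxMor d12 T.t1) (boxMor d12 T.tf))
          (dbold (boxMor d12 T.t0) (boxMor d12 T.t1) (boxMor d12 T.th))
          (boxCone d12 T.tcr))
        (dbold (dbold (boxMor d12 H.k0) (boxMor d12 H.k1) (boxMor d12 H.kf))
          (dbold (boxMor d12 H.k0) (boxMor d12 H.k1) (boxMor d12 H.kh))
          (boxCone d12 H.kcr))) := by
  classical
  have bT := fun {N : Type} [AddCommGroup N] [Module F2 N]
      {δ : N →ₗ[F2] A2 ⊗[F2] N} (h : IsTypeD dA2 δ) =>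
    box_typeD (d11 := d11) (d12 := d12) hP1 hP2 hP3 h
  refine ⟨⟨box_typeD hP1 hP2 hP3 X.h0, box_typeD hP1 hP2 hP3 X.h1,
    box_mor hP1 hP2 hP3 X.hf, box_mor hP1 hP2 hP3 X.hh, ?_⟩, ?_, ?_⟩
  · -- the cone condition for the box typewriter
    rw [box_dboldδ, box_dboldδ, boxCone_eq_cj]
    exact cj_isDMor _ _ _ (box_mor hP1 hP2 hP3 X.hcr)
  · -- functoriality on morphisms
    intro Y T
    refine ⟨box_mor hP1 hP2 hP3 T.h0, box_mor hP1 hP2 hP3 T.h1, ?_, ?_, ?_⟩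
    · rw [box_comp d12 hP3, box_comp d12 hP3]
      exact box_rel hP1 hP2 hP3 T.hf
    · rw [box_comp d12 hP3, box_comp d12 hP3]
      exact box_rel hP1 hP2 hP3 T.hh
    · rw [← box_dbold T.t0 T.t1 T.th, ← box_dbold T.t0 T.t1 T.tf,
        box_dboldδ, box_dboldδ]
      simp only [boxCone_eq_cj]
      simp only [cj_comp2, cj_rT]
      simp only [← cj_add]
      apply congrArg
      rw [box_comp d12 hP3, box_comp d12 hP3]
      exact box_rel hP1 hP2 hP3 T.hcr
  · -- functoriality on homotopies
    intro Y S T H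
    refine ⟨box_htpy hP1 hP2 hP3 H.p0, box_htpy hP1 hP2 hP3 H.p1, ?_, ?_, ?_⟩
    · rw [box_dboldδ, box_dboldδ, ← box_dbold S.t0 S.t1 S.tf,
        ← box_dbold T.t0 T.t1 T.tf, ← box_dbold H.k0 H.k1 H.kf]
      simp only [boxCone_eq_cj]
      exact cj_isDHtpy _ _ _ (box_htpy hP1 hP2 hP3 H.pf)
    · rw [box_dboldδ, box_dboldδ, ← box_dbold S.t0 S.t1 S.th,
        ← box_dbold T.t0 T.t1 T.th, ← box_dbold H.k0 H.k1 H.kh]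
      simp only [boxCone_eq_cj]
      exact cj_isDHtpy _ _ _ (box_htpy hP1 hP2 hP3 H.ph)
    · rw [box_dboldδ X.δ0 X.δ1 X.Df, box_dboldδ X.δ0 X.δ1 X.Dh,
        box_dboldδ Y.δ0 Y.δ1 Y.Df, box_dboldδ Y.δ0 Y.δ1 Y.Dh,
        ← box_dbold S.t0 S.t1 S.tf, ← box_dbold S.t0 S.t1 S.th,
        ← box_dbold T.t0 T.t1 T.tf, ← box_dbold T.t0 T.t1 T.th,
        ← box_dbold H.k0 H.k1 H.kf, ← box_dbold H.k0 H.k1 H.kh]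
      simp only [boxCone_eq_cj]
      rw [← cj_dbold, ← cj_dbold, ← cj_dbold, ← cj_dbold, ← cj_dbold]
      rw [box_dboldδ, box_dboldδ, ← box_dbold, ← box_dbold, ← box_dbold]
      simp only [boxCone_eq_cj]
      simp only [cj_cj]
      exact cj_isDHtpy _ _ _ (box_htpy hP1 hP2 hP3 H.pcr)
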